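/- Let N ≥ 1, let z_b ∈ C¹(ℝ²), let h_1,…,h_N : ℝ² → ℝ be C¹ and positive, and let 𝐮_1,…,𝐮_N : ℝ² → ℝ² be C¹. Set z_{α+1/2} := z_b + Σ_{j=1}^α h_j (α = 0,…,N) and z_α := z_{α−1/2} + h_α/2. For z with z_{α−1/2}(x,y) ≤ z ≤ z_{α+1/2}(x,y), define the vertical velocity w(x,y,z) := − ∇_{x,y}·( Σ_{j=1}^{α−1} h_j 𝐮_j + (z − z_{α−1/2}) 𝐮_α ) (the horizontal divergence being taken at fixed z), and define the layer average w_α(x,y) := (1/h_α) ∫_{z_{α−1/2}}^{z_{α+1/2}} w(x,y,z) dz. Then w_α = k_α − z_α ∇_{x,y}·𝐮_α for every α = 1,…,N, where k_1 := ∇_{x,y}·(z_b 𝐮_1) and k_{α+1} := k_α + ∇_{x,y}·( z_{α+1/2}(𝐮_{α+1} − 𝐮_α) ). -/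

import Mathlib

open MeasureTheory

/-- Partial derivative in `x` of a function of `(x, y)`. -/
noncomputable def dx2 (f : ℝ × ℝ → ℝ) (q : ℝ × ℝ) : ℝ :=
  deriv (fun s => f (s, q.2)) q.1

/-- Partial derivative in `y` of a function of `(x, y)`. -/
noncomputable def dy2 (f : ℝ × ℝ → ℝ) (q : ℝ × ℝ) : ℝ :=
  deriv (fun s => f (q.1, s)) q.2

/-- Horizontal divergence `∇_{x,y}·F` of a horizontal vector field on `ℝ²`. -/
noncomputable def div2 (F : ℝ × ℝ → ℝ × ℝ) (q : ℝ × ℝ) : ℝ :=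
  dx2 (fun p => (F p).1) q + dy2 (fun p => (F p).2) q

/- Auxiliary lemmas -/

lemma secx_diff (f : ℝ × ℝ → ℝ) (hf : Differentiable ℝ f) (q : ℝ × ℝ) :
    DifferentiableAt ℝ (fun s => f (s, q.2)) q.1 :=
  (hf (q.1, q.2)).comp q.1 (differentiableAt_id.prodMk (differentiableAt_const _))

lemma secy_diff (f : ℝ × ℝ → ℝ) (hf : Differentiable ℝ f) (q : ℝ × ℝ) :
    DifferentiableAt ℝ (fun s => f (q.1, s)) q.2 :=
  (hf (q.1, q.2)).comp q.2 ((differentiableAt_const _).prodMk differentiableAt_id)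

lemma dx2_comb (f g h : ℝ × ℝ → ℝ) (z : ℝ)
    (hf : Differentiable ℝ f) (hg : Differentiable ℝ g) (hh : Differentiable ℝ h)
    (q : ℝ × ℝ) :
    dx2 (fun p => f p + z * g p - h p) q = dx2 f q + z * dx2 g q - dx2 h q := by
  unfold dx2
  have Hf := secx_diff f hf q
  have Hg := secx_diff g hg q
  have Hh := secx_diff h hh q
  rw [show (fun s => (fun p => f p + z * g p - h p) (s, q.2))
      = fun s => (f (s, q.2) + z * g (s, q.2)) - h (s, q.2) from rfl,
    deriv_fun_sub (Hf.fun_add (Hg.const_mul z)) Hh, deriv_fun_add Hf (Hg.const_mul z),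
    deriv_const_mul z Hg]

lemma dy2_comb (f g h : ℝ × ℝ → ℝ) (z : ℝ)
    (hf : Differentiable ℝ f) (hg : Differentiable ℝ g) (hh : Differentiable ℝ h)
    (q : ℝ × ℝ) :
    dy2 (fun p => f p + z * g p - h p) q = dy2 f q + z * dy2 g q - dy2 h q := by
  unfold dy2
  have Hf := secy_diff f hf q
  have Hg := secy_diff g hg q
  have Hh := secy_diff h hh q
  rw [show (fun s => (fun p => f p + z * g p - h p) (q.1, s))
      = fun s => (f (q.1, s) + z * g (q.1, s)) - h (q.1, s) from rfl,
    deriv_fun_sub (Hf.fun_add (Hg.const_mul z)) Hh, deriv_fun_add Hf (Hg.const_mul z),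
    deriv_const_mul z Hg]

/-- Structure lemma: divergence of `F + z • G - H`. -/
lemma div2_comb (F G H : ℝ × ℝ → ℝ × ℝ) (z : ℝ)
    (hF1 : Differentiable ℝ fun p => (F p).1) (hF2 : Differentiable ℝ fun p => (F p).2)
    (hG1 : Differentiable ℝ fun p => (G p).1) (hG2 : Differentiable ℝ fun p => (G p).2)
    (hH1 : Differentiable ℝ fun p => (H p).1) (hH2 : Differentiable ℝ fun p => (H p).2)
    (q : ℝ × ℝ) :
    div2 (fun p => F p + z • G p - H p) q = div2 F q + z * div2 G q - div2 H q := by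
  unfold div2
  have e1 : (fun p => ((fun p => F p + z • G p - H p) p).1)
      = fun p => (F p).1 + z * (G p).1 - (H p).1 := rfl
  have e2 : (fun p => ((fun p => F p + z • G p - H p) p).2)
      = fun p => (F p).2 + z * (G p).2 - (H p).2 := rfl
  rw [e1, e2, dx2_comb _ _ _ _ hF1 hG1 hH1 q, dy2_comb _ _ _ _ hF2 hG2 hH2 q]
  ring

lemma div2_add (F G : ℝ × ℝ → ℝ × ℝ)
    (hF1 : Differentiable ℝ fun p => (F p).1) (hF2 : Differentiable ℝ fun p => (F p).2)
    (hG1 : Differentiable ℝ fun p => (G p).1) (hG2 : Differentiable ℝ fun p => (G p).2)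
    (q : ℝ × ℝ) :
    div2 (fun p => F p + G p) q = div2 F q + div2 G q := by
  have := div2_comb F G (fun _ => 0) 1 hF1 hF2 hG1 hG2
    (by simpa using differentiable_const (0:ℝ)) (by simpa using differentiable_const (0:ℝ)) q
  have hz : div2 (fun _ => (0 : ℝ × ℝ)) q = 0 := by
    unfold div2 dx2 dy2
    simp
  simp only [one_smul, sub_zero, hz] at this
  simpa using this

lemma div2_sub (F G : ℝ × ℝ → ℝ × ℝ)
    (hF1 : Differentiable ℝ fun p => (F p).1) (hF2 : Differentiable ℝ fun p => (F p).2)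
    (hG1 : Differentiable ℝ fun p => (G p).1) (hG2 : Differentiable ℝ fun p => (G p).2)
    (q : ℝ × ℝ) :
    div2 (fun p => F p - G p) q = div2 F q - div2 G q := by
  have := div2_comb (fun _ => 0) (fun _ => 0) G 1
    (by simpa using differentiable_const (0:ℝ)) (by simpa using differentiable_const (0:ℝ))
    (by simpa using differentiable_const (0:ℝ)) (by simpa using differentiable_const (0:ℝ))
    hG1 hG2 q
  -- this : div2 (fun p => 0 + 1 • 0 - G p) q = div2 0 + 1 * div2 0 - div2 G q
  have hz : div2 (fun _ => (0 : ℝ × ℝ)) q = 0 := by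
    unfold div2 dx2 dy2; simp
  have e : (fun p => (0 : ℝ × ℝ) + (1:ℝ) • (0:ℝ×ℝ) - G p) = fun p => (fun _ => (0:ℝ×ℝ)) p - G p := by
    funext p; simp
  rw [e, hz] at this
  have := this
  have key : div2 (fun p => (fun _ => (0:ℝ×ℝ)) p - G p) q = - div2 G q := by
    simpa using this
  have e2 : div2 (fun p => F p - G p) q
      = div2 (fun p => F p + (fun p => (fun _ => (0:ℝ×ℝ)) p - G p) p) q := by
    congr 1; funext p; simp [sub_eq_add_neg]
  rw [e2, div2_add F _ hF1 hF2 (by simpa using hG1.neg) (by simpa using hG2.neg) q, key]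
  ring

/-- the layer-averaged vertical velocity of the layer-averaged
hydrostatic model is `w_α = k_α − z_α ∇_{x,y}·𝐮_α`. -/
theorem stmt3
    (N : ℕ) (hN : 1 ≤ N)
    (zb : ℝ × ℝ → ℝ) (hzbC1 : ContDiff ℝ 1 zb)
    (hlay : ℕ → ℝ × ℝ → ℝ)
    (hlayC1 : ∀ α ∈ Finset.Icc 1 N, ContDiff ℝ 1 (hlay α))
    (hlaypos : ∀ α ∈ Finset.Icc 1 N, ∀ q, 0 < hlay α q)
    (u : ℕ → ℝ × ℝ → ℝ × ℝ)
    (huC1 : ∀ α ∈ Finset.Icc 1 N, ContDiff ℝ 1 (u α))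
    (zh : ℕ → ℝ × ℝ → ℝ)
    (hzh : ∀ α q, zh α q = zb q + ∑ j ∈ Finset.Icc 1 α, hlay j q)
    (zm : ℕ → ℝ × ℝ → ℝ)
    (hzm : ∀ α q, zm α q = zh (α - 1) q + hlay α q / 2)
    (w : ℕ → ℝ → ℝ × ℝ → ℝ)
    (hw : ∀ α z q, w α z q =
      -div2 (fun p => (∑ j ∈ Finset.Icc 1 (α - 1), hlay j p • u j p)
        + (z - zh (α - 1) p) • u α p) q)
    (wavg : ℕ → ℝ × ℝ → ℝ)
    (hwavg : ∀ α q, wavg α q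
      = (1 / hlay α q) * ∫ z in (zh (α - 1) q)..(zh α q), w α z q)
    (k : ℕ → ℝ × ℝ → ℝ)
    (hk1 : ∀ q, k 1 q = div2 (fun p => zb p • u 1 p) q)
    (hkrec : ∀ α ∈ Finset.Icc 1 (N - 1), ∀ q,
      k (α + 1) q = k α q + div2 (fun p => zh α p • (u (α + 1) p - u α p)) q) :
    ∀ α ∈ Finset.Icc 1 N, ∀ q, wavg α q = k α q - zm α q * div2 (u α) q := by
  -- differentiability of the basic fields
  have hlayD : ∀ α ∈ Finset.Icc 1 N, Differentiable ℝ (hlay α) :=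
    fun α hα => (hlayC1 α hα).differentiable one_ne_zero
  have huD1 : ∀ α ∈ Finset.Icc 1 N, Differentiable ℝ fun p => (u α p).1 :=
    fun α hα => ((huC1 α hα).differentiable one_ne_zero).fst
  have huD2 : ∀ α ∈ Finset.Icc 1 N, Differentiable ℝ fun p => (u α p).2 :=
    fun α hα => ((huC1 α hα).differentiable one_ne_zero).snd
  have hzhD : ∀ β ≤ N, Differentiable ℝ (zh β) := by
    intro β hβ
    have e : zh β = fun q => zb q + ∑ j ∈ Finset.Icc 1 β, hlay j q := funext (hzh β)
    rw [e]
    refine (hzbC1.differentiable one_ne_zero).add (Differentiable.fun_sum ?_)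
    intro j hj
    exact hlayD j (Finset.mem_Icc.mpr ⟨(Finset.mem_Icc.mp hj).1, le_trans (Finset.mem_Icc.mp hj).2 hβ⟩)
  -- components of partial sums S_β p = ∑_{j=1}^β hlay j p • u j p
  have hSD1 : ∀ β ≤ N, Differentiable ℝ fun p =>
      ((∑ j ∈ Finset.Icc 1 β, hlay j p • u j p) : ℝ × ℝ).1 := by
    intro β hβ
    have e : (fun p => ((∑ j ∈ Finset.Icc 1 β, hlay j p • u j p) : ℝ × ℝ).1)
        = fun p => ∑ j ∈ Finset.Icc 1 β, hlay j p * (u j p).1 := by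
      funext p; rw [Prod.fst_sum]; simp
    rw [e]
    refine Differentiable.fun_sum ?_
    intro j hj
    have hjN : j ∈ Finset.Icc 1 N := Finset.mem_Icc.mpr
      ⟨(Finset.mem_Icc.mp hj).1, le_trans (Finset.mem_Icc.mp hj).2 hβ⟩
    exact (hlayD j hjN).mul (huD1 j hjN)
  have hSD2 : ∀ β ≤ N, Differentiable ℝ fun p =>
      ((∑ j ∈ Finset.Icc 1 β, hlay j p • u j p) : ℝ × ℝ).2 := by
    intro β hβ
    have e : (fun p => ((∑ j ∈ Finset.Icc 1 β, hlay j p • u j p) : ℝ × ℝ).2)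
        = fun p => ∑ j ∈ Finset.Icc 1 β, hlay j p * (u j p).2 := by
      funext p; rw [Prod.snd_sum]; simp
    rw [e]
    refine Differentiable.fun_sum ?_
    intro j hj
    have hjN : j ∈ Finset.Icc 1 N := Finset.mem_Icc.mpr
      ⟨(Finset.mem_Icc.mp hj).1, le_trans (Finset.mem_Icc.mp hj).2 hβ⟩
    exact (hlayD j hjN).mul (huD2 j hjN)
  -- layer width
  have hwidth : ∀ α, 1 ≤ α → ∀ q : ℝ × ℝ, zh α q = zh (α - 1) q + hlay α q := by
    intro α hα q
    obtain ⟨m, rfl⟩ := Nat.exists_eq_add_of_le hα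
    have : 1 + m = m + 1 := by omega
    rw [this, Nat.add_sub_cancel, hzh, hzh,
      Finset.sum_Icc_succ_top (by omega : 1 ≤ m + 1)]
    ring
  -- the key identity for k
  have key : ∀ α, 1 ≤ α → α ≤ N → ∀ q, k α q
      = div2 (fun p => zh (α - 1) p • u α p) q
        - div2 (fun p => (∑ j ∈ Finset.Icc 1 (α - 1), hlay j p • u j p)) q := by
    intro α
    induction α with
    | zero => intro h; omega
    | succ n ih =>
      intro _ hnN q
      rcases Nat.eq_zero_or_pos n with h0 | hpos
      · subst h0
        have e0 : (fun p => (∑ j ∈ Finset.Icc 1 (1 - 1), hlay j p • u j p : ℝ × ℝ))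
            = fun _ => (0 : ℝ × ℝ) := by
          funext p; simp
        have ezb : (fun p => zh (1 - 1) p • u 1 p) = fun p => zb p • u 1 p := by
          funext p
          have : zh 0 p = zb p := by rw [hzh]; simp
          simp [this]
        rw [ezb, e0, hk1 q]
        have hz : div2 (fun _ => (0 : ℝ × ℝ)) q = 0 := by
          unfold div2 dx2 dy2; simp
        rw [hz]; ring
      · -- inductive step: n ≥ 1, n + 1 ≤ N
        have hnN' : n ≤ N := by omega
        have hn1 : n ∈ Finset.Icc 1 N := Finset.mem_Icc.mpr ⟨hpos, hnN'⟩
        have hn1' : n + 1 ∈ Finset.Icc 1 N := Finset.mem_Icc.mpr ⟨by omega, hnN⟩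
        have hmem : n ∈ Finset.Icc 1 (N - 1) := Finset.mem_Icc.mpr ⟨hpos, by omega⟩
        rw [hkrec n hmem q, ih hpos hnN' q]
        -- abbreviations
        have hhu1 : Differentiable ℝ fun p => (hlay n p • u n p : ℝ × ℝ).1 := by
          have e : (fun p => (hlay n p • u n p : ℝ × ℝ).1) = fun p => hlay n p * (u n p).1 := by
            funext p; simp
          rw [e]; exact (hlayD n hn1).mul (huD1 n hn1)
        have hhu2 : Differentiable ℝ fun p => (hlay n p • u n p : ℝ × ℝ).2 := by
          have e : (fun p => (hlay n p • u n p : ℝ × ℝ).2) = fun p => hlay n p * (u n p).2 := by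
            funext p; simp
          rw [e]; exact (hlayD n hn1).mul (huD2 n hn1)
        have hz1 : Differentiable ℝ fun p => (zh n p • u (n + 1) p : ℝ × ℝ).1 := by
          have e : (fun p => (zh n p • u (n+1) p : ℝ × ℝ).1)
              = fun p => zh n p * (u (n+1) p).1 := by funext p; simp
          rw [e]; exact (hzhD n hnN').mul (huD1 (n+1) hn1')
        have hz2 : Differentiable ℝ fun p => (zh n p • u (n + 1) p : ℝ × ℝ).2 := by
          have e : (fun p => (zh n p • u (n+1) p : ℝ × ℝ).2)
              = fun p => zh n p * (u (n+1) p).2 := by funext p; simp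
        
          rw [e]; exact (hzhD n hnN').mul (huD2 (n+1) hn1')
        have hzn1 : Differentiable ℝ fun p => (zh n p • u n p : ℝ × ℝ).1 := by
          have e : (fun p => (zh n p • u n p : ℝ × ℝ).1)
              = fun p => zh n p * (u n p).1 := by funext p; simp
          rw [e]; exact (hzhD n hnN').mul (huD1 n hn1)
        have hzn2 : Differentiable ℝ fun p => (zh n p • u n p : ℝ × ℝ).2 := by
          have e : (fun p => (zh n p • u n p : ℝ × ℝ).2)
              = fun p => zh n p * (u n p).2 := by funext p; simp
          rw [e]; exact (hzhD n hnN').mul (huD2 n hn1)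
        have hzm1 : Differentiable ℝ fun p => (zh (n-1) p • u n p : ℝ × ℝ).1 := by
          have e : (fun p => (zh (n-1) p • u n p : ℝ × ℝ).1)
              = fun p => zh (n-1) p * (u n p).1 := by funext p; simp
          rw [e]; exact (hzhD (n-1) (by omega)).mul (huD1 n hn1)
        have hzm2 : Differentiable ℝ fun p => (zh (n-1) p • u n p : ℝ × ℝ).2 := by
          have e : (fun p => (zh (n-1) p • u n p : ℝ × ℝ).2)
              = fun p => zh (n-1) p * (u n p).2 := by funext p; simp
          rw [e]; exact (hzhD (n-1) (by omega)).mul (huD2 n hn1)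
        -- split S_n = S_{n-1} + h_n • u_n
        have eS : (fun p => (∑ j ∈ Finset.Icc 1 ((n+1) - 1), hlay j p • u j p : ℝ × ℝ))
            = fun p => (∑ j ∈ Finset.Icc 1 (n - 1), hlay j p • u j p : ℝ × ℝ)
              + hlay n p • u n p := by
          funext p
          have h1 : (n + 1) - 1 = n := by omega
          rw [h1]
          obtain ⟨m, rfl⟩ := Nat.exists_eq_add_of_le hpos
          have h2 : 1 + m = m + 1 := by omega
          rw [h2, Nat.add_sub_cancel, Finset.sum_Icc_succ_top (by omega : 1 ≤ m + 1)]
        have dS : div2 (fun p => (∑ j ∈ Finset.Icc 1 ((n+1) - 1), hlay j p • u j p : ℝ × ℝ)) q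
            = div2 (fun p => (∑ j ∈ Finset.Icc 1 (n - 1), hlay j p • u j p : ℝ × ℝ)) q
              + div2 (fun p => hlay n p • u n p) q := by
          rw [eS]
          exact div2_add _ _ (hSD1 (n-1) (by omega)) (hSD2 (n-1) (by omega)) hhu1 hhu2 q
        -- zh n • u n = zh (n-1) • u n + h_n • u n
        have ezn : (fun p => zh n p • u n p)
            = fun p => (zh (n-1) p • u n p) + (hlay n p • u n p) := by
          funext p
          rw [hwidth n hpos p, add_smul]
        have dzn : div2 (fun p => zh n p • u n p) q
            = div2 (fun p => zh (n-1) p • u n p) q + div2 (fun p => hlay n p • u n p) q := by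
          rw [ezn]
          exact div2_add _ _ hzm1 hzm2 hhu1 hhu2 q
        -- zh n • (u(n+1) - u n) = zh n • u(n+1) - zh n • u n
        have edif : (fun p => zh n p • (u (n+1) p - u n p))
            = fun p => (zh n p • u (n+1) p) - (zh n p • u n p) := by
          funext p; rw [smul_sub]
        have ddif : div2 (fun p => zh n p • (u (n+1) p - u n p)) q
            = div2 (fun p => zh n p • u (n+1) p) q - div2 (fun p => zh n p • u n p) q := by
          rw [edif]
          exact div2_sub _ _ hz1 hz2 hzn1 hzn2 q
        rw [ddif, dS, dzn]
        have h1 : (n + 1) - 1 = n := by omega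
        rw [h1]
        ring
  -- main computation
  intro α hα q
  obtain ⟨hα1, hαN⟩ := Finset.mem_Icc.mp hα
  have hαmem : α ∈ Finset.Icc 1 N := hα
  set a := zh (α - 1) q with ha
  set b := zh α q with hb
  set Cc := div2 (fun p => zh (α - 1) p • u α p) q
    - div2 (fun p => (∑ j ∈ Finset.Icc 1 (α - 1), hlay j p • u j p)) q with hCc
  set D := div2 (u α) q with hD
  -- w is affine in z
  have hwz : ∀ z : ℝ, w α z q = Cc - z * D := by
    intro z
    rw [hw]
    have e : (fun p => (∑ j ∈ Finset.Icc 1 (α - 1), hlay j p • u j p : ℝ × ℝ)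
        + (z - zh (α - 1) p) • u α p)
        = fun p => (∑ j ∈ Finset.Icc 1 (α - 1), hlay j p • u j p : ℝ × ℝ)
          + z • u α p - (zh (α - 1) p • u α p) := by
      funext p
      rw [sub_smul]
      abel
    rw [e, div2_comb _ _ _ z (hSD1 (α-1) (by omega)) (hSD2 (α-1) (by omega))
      (huD1 α hαmem) (huD2 α hαmem)
      (by
        have e1 : (fun p => (zh (α-1) p • u α p : ℝ × ℝ).1)
            = fun p => zh (α-1) p * (u α p).1 := by funext p; simp
        rw [e1]; exact (hzhD (α-1) (by omega)).mul (huD1 α hαmem))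
      (by
        have e2 : (fun p => (zh (α-1) p • u α p : ℝ × ℝ).2)
            = fun p => zh (α-1) p * (u α p).2 := by funext p; simp
        rw [e2]; exact (hzhD (α-1) (by omega)).mul (huD2 α hαmem)) q]
    rw [hCc, hD]
    have : div2 (fun p => u α p) q = div2 (u α) q := rfl
    rw [this]
    ring
  -- integrate
  have hint : (∫ z in a..b, w α z q) = (b - a) * Cc - ((b ^ 2 - a ^ 2) / 2) * D := by
    have e : (∫ z in a..b, w α z q) = ∫ z in a..b, (Cc - z * D) := by
      apply intervalIntegral.integral_congr
      intro z _
      exact hwz z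
    have hsub : (∫ z in a..b, (Cc - z * D))
        = (∫ _z in a..b, Cc) - ∫ z in a..b, z * D :=
      intervalIntegral.integral_sub intervalIntegrable_const
        ((continuous_id.mul continuous_const).intervalIntegrable a b)
    have hmul : (∫ z in a..b, z * D) = (∫ z in a..b, z) * D :=
      intervalIntegral.integral_mul_const D (fun z => z)
    rw [e, hsub, hmul, intervalIntegral.integral_const, integral_id]
    simp [smul_eq_mul]
  -- final algebra
  have hb_eq : b = a + hlay α q := hwidth α hα1 q
  have hpos := hlaypos α hαmem q
  rw [hwavg, hint, key α hα1 hαN q, hzm]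
  rw [← hCc, ← ha, hb_eq]
  field_simp
  ring
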